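/- Let d ≥ 1, let v₁, …, v_k ∈ ℤ^d be linearly independent over ℚ, and let φ : ℤ^d → ℤ be a group homomorphism with φ(vᵢ) > 0 for every i. For each n ∈ ℕ the set of lattice points u in the relative interior of the cone spanned by the vᵢ (i.e. u = Σᵢ λᵢ vᵢ with all λᵢ ∈ ℚ, λᵢ > 0) with φ(u) = n is finite; let c°_n denote its cardinality. Then in ℤ[[t]] one has (Σ_{n ∈ ℕ} c°_n tⁿ) · ∏_{i=1}^{k} (1 − t^{φ(vᵢ)}) = Σ_{p ∈ P°_τ} t^{φ(p)}, where P°_τ := {u ∈ ℤ^d : u = Σᵢ μᵢ vᵢ with μᵢ ∈ ℚ, 0 < μᵢ ≤ 1} is the (finite) upper half-open parallelotope. -/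

import Mathlib

/-- `u ∈ ℤ^d` lies in the relative interior of the simplicial cone spanned by
`v₁, …, v_k`, i.e. `u = Σᵢ λᵢ vᵢ` with all `λᵢ ∈ ℚ`, `λᵢ > 0`. -/
def coneIntMem (d k : ℕ) (v : Fin k → Fin d → ℤ) (u : Fin d → ℤ) : Prop :=
  ∃ lam : Fin k → ℚ, (∀ i, 0 < lam i) ∧ ∀ j, (u j : ℚ) = ∑ i, lam i * (v i j : ℚ)

/-- `u ∈ ℤ^d` lies in the upper half-open parallelotope
`P°_τ = {Σᵢ μᵢ vᵢ : 0 < μᵢ ≤ 1}`. -/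
def parUpperMem (d k : ℕ) (v : Fin k → Fin d → ℤ) (u : Fin d → ℤ) : Prop :=
  ∃ mu : Fin k → ℚ, (∀ i, 0 < mu i ∧ mu i ≤ 1) ∧ ∀ j, (u j : ℚ) = ∑ i, mu i * (v i j : ℚ)


section AuxLemmas

variable {d k : ℕ} {v : Fin k → Fin d → ℤ}

private lemma coeffs_unique
    (hv : LinearIndependent ℚ (fun i : Fin k => fun j : Fin d => (v i j : ℚ)))
    {c c' : Fin k → ℚ}
    (h : ∀ j, ∑ i, c i * (v i j : ℚ) = ∑ i, c' i * (v i j : ℚ)) : c = c' := by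
  have h2 := Fintype.linearIndependent_iff.mp hv (fun i => c i - c' i) ?_
  · funext i
    have := h2 i
    linarith
  · funext j
    simp only [Finset.sum_apply, Pi.smul_apply, smul_eq_mul, Pi.zero_apply, sub_mul]
    rw [Finset.sum_sub_distrib, h j, sub_self]

private lemma phi_single_sum (φ : (Fin d → ℤ) →+ ℤ) (u : Fin d → ℤ) :
    φ u = ∑ j, u j * φ (Pi.single j 1) := by
  conv_lhs => rw [← Finset.univ_sum_single u]
  rw [map_sum]
  refine Finset.sum_congr rfl fun j _ => ?_
  have h : Pi.single j (u j) = u j • (Pi.single j (1 : ℤ) : Fin d → ℤ) := by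
    funext x
    by_cases hx : x = j <;> simp [Pi.single_apply, hx]
  rw [h, map_zsmul, smul_eq_mul]

private lemma phi_rat (φ : (Fin d → ℤ) →+ ℤ) {u : Fin d → ℤ} {lam : Fin k → ℚ}
    (h : ∀ j, (u j : ℚ) = ∑ i, lam i * (v i j : ℚ)) :
    (φ u : ℚ) = ∑ i, lam i * (φ (v i) : ℚ) := by
  have key : ∀ x : Fin d → ℤ,
      ((φ x : ℤ) : ℚ) = ∑ j, (x j : ℚ) * (φ (Pi.single j 1) : ℚ) := by
    intro x
    rw [phi_single_sum φ x]
    push_cast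
    ring
  calc (φ u : ℚ) = ∑ j, (∑ i, lam i * (v i j : ℚ)) * (φ (Pi.single j 1) : ℚ) := by
        rw [key u]; exact Finset.sum_congr rfl fun j _ => by rw [h j]
    _ = ∑ i, lam i * ∑ j, (v i j : ℚ) * (φ (Pi.single j 1) : ℚ) := by
        simp_rw [Finset.sum_mul, mul_assoc]
        rw [Finset.sum_comm]
        simp_rw [← Finset.mul_sum]
    _ = ∑ i, lam i * (φ (v i) : ℚ) := by
        refine Finset.sum_congr rfl fun i _ => ?_
        rw [← key (v i)]

private lemma phi_nonneg (φ : (Fin d → ℤ) →+ ℤ) (hφ : ∀ i, 0 < φ (v i))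
    {p : Fin d → ℤ} (h : parUpperMem d k v p) : 0 ≤ φ p := by
  obtain ⟨mu, hmu, hrep⟩ := h
  have h0 : (0 : ℚ) ≤ (φ p : ℚ) := by
    rw [phi_rat φ hrep]
    refine Finset.sum_nonneg fun i _ => mul_nonneg (hmu i).1.le ?_
    exact_mod_cast (hφ i).le
  exact_mod_cast h0

private lemma phi_shift (φ : (Fin d → ℤ) →+ ℤ) (p : Fin d → ℤ) (m : Fin k → ℕ) :
    φ (fun j => p j + ∑ i, (m i : ℤ) * v i j) = φ p + ∑ i, (m i : ℤ) * φ (v i) := by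
  have h : (fun j => p j + ∑ i, (m i : ℤ) * v i j) = p + ∑ i, (m i : ℤ) • v i := by
    funext j
    simp [Finset.sum_apply]
  rw [h, map_add, map_sum]
  congr 1
  refine Finset.sum_congr rfl fun i _ => ?_
  rw [map_zsmul, smul_eq_mul]

private lemma finite_box (B : Fin d → ℤ) : {u : Fin d → ℤ | ∀ j, |u j| ≤ B j}.Finite := by
  apply Set.Finite.subset (Set.Finite.pi (fun j => Set.finite_Icc (-(B j)) (B j)))
  intro u hu
  rw [Set.mem_univ_pi]
  exact fun j => Set.mem_Icc.mpr (abs_le.mp (hu j))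

private lemma finite_par : {u : Fin d → ℤ | parUpperMem d k v u}.Finite := by
  apply Set.Finite.subset (finite_box (fun j => ∑ i, |v i j|))
  rintro u ⟨mu, hmu, hrep⟩ j
  have key : |(u j : ℚ)| ≤ ∑ i, |(v i j : ℚ)| := by
    rw [hrep j]
    refine le_trans (Finset.abs_sum_le_sum_abs _ _) (Finset.sum_le_sum fun i _ => ?_)
    rw [abs_mul]
    have h1 : |mu i| ≤ 1 := abs_le.mpr ⟨by linarith [(hmu i).1], (hmu i).2⟩
    nlinarith [abs_nonneg ((v i j : ℚ))]
  have h2 : ((|u j| : ℤ) : ℚ) ≤ ((∑ i, |v i j| : ℤ) : ℚ) := by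
    push_cast
    exact key
  exact_mod_cast h2

private lemma finite_cone (φ : (Fin d → ℤ) →+ ℤ) (hφ : ∀ i, 0 < φ (v i)) (n : ℕ) :
    {u : Fin d → ℤ | coneIntMem d k v u ∧ φ u = (n : ℤ)}.Finite := by
  apply Set.Finite.subset (finite_box (fun j => (n : ℤ) * ∑ i, |v i j|))
  rintro u ⟨⟨lam, hlam, hrep⟩, hφu⟩ j
  have hsum : (φ u : ℚ) = ∑ i, lam i * (φ (v i) : ℚ) := phi_rat φ hrep
  have hn : (∑ i, lam i * (φ (v i) : ℚ)) = (n : ℚ) := by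
    rw [← hsum, hφu]
    push_cast
    ring
  have hlamn : ∀ i, lam i ≤ n := by
    intro i
    have h1 : lam i * 1 ≤ lam i * (φ (v i) : ℚ) := by
      refine mul_le_mul_of_nonneg_left ?_ (hlam i).le
      exact_mod_cast hφ i
    have h2 : lam i * (φ (v i) : ℚ) ≤ ∑ i, lam i * (φ (v i) : ℚ) :=
      Finset.single_le_sum
        (fun i _ => mul_nonneg (hlam i).le (by exact_mod_cast (hφ i).le))
        (Finset.mem_univ i)
    rw [hn] at h2
    linarith
  have key : |(u j : ℚ)| ≤ (n : ℚ) * ∑ i, |(v i j : ℚ)| := by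
    rw [hrep j, Finset.mul_sum]
    refine le_trans (Finset.abs_sum_le_sum_abs _ _) (Finset.sum_le_sum fun i _ => ?_)
    rw [abs_mul, abs_of_pos (hlam i)]
    exact mul_le_mul_of_nonneg_right (hlamn i) (abs_nonneg _)
  have h2 : ((|u j| : ℤ) : ℚ) ≤ (((n : ℤ) * ∑ i, |v i j| : ℤ) : ℚ) := by
    push_cast
    exact key
  exact_mod_cast h2

private lemma exists_nat_frac {lam : ℚ} (h : 0 < lam) :
    ∃ m : ℕ, 0 < lam - m ∧ lam - m ≤ 1 := by
  have h1 : 1 ≤ ⌈lam⌉₊ := Nat.ceil_pos.mpr h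
  have hc : ((⌈lam⌉₊ - 1 : ℕ) : ℚ) = (⌈lam⌉₊ : ℚ) - 1 := by
    rw [Nat.cast_sub h1]
    norm_num
  refine ⟨⌈lam⌉₊ - 1, ?_, ?_⟩
  · have h2 : (⌈lam⌉₊ : ℚ) < lam + 1 := Nat.ceil_lt_add_one h.le
    rw [hc]; linarith
  · have h3 := Nat.le_ceil lam
    rw [hc]; linarith

private lemma nat_ceil_frac_add (x : ℚ) (a : ℕ) (hx : 0 < x) (hx1 : x ≤ 1) :
    ⌈x + a⌉₊ = a + 1 := by
  rw [Nat.ceil_eq_iff (by omega)]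
  constructor
  · simp only [Nat.add_sub_cancel]
    push_cast
    linarith
  · push_cast
    linarith

private lemma frac_unique {mu mu' : ℚ} {m m' : ℕ}
    (h1 : 0 < mu) (h2 : mu ≤ 1) (h1' : 0 < mu') (h2' : mu' ≤ 1)
    (h : mu + m = mu' + m') : m = m' ∧ mu = mu' := by
  have e1 := nat_ceil_frac_add mu m h1 h2
  have e2 := nat_ceil_frac_add mu' m' h1' h2'
  rw [h, e2] at e1
  have hm : m = m' := by omega
  subst hm
  refine ⟨rfl, by linarith⟩

private lemma geomAux (a : ℕ) (ha : 0 < a) :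
    (PowerSeries.mk fun n => if a ∣ n then (1 : ℤ) else 0) * (1 - PowerSeries.X ^ a) = 1 := by
  have hsplit : (PowerSeries.mk fun n => if a ∣ n then (1 : ℤ) else 0) * (1 - PowerSeries.X ^ a)
      = PowerSeries.mk (fun n => if a ∣ n then (1 : ℤ) else 0)
        - (PowerSeries.mk fun n => if a ∣ n then (1 : ℤ) else 0) * PowerSeries.X ^ a := by
    ring
  rw [hsplit]
  ext n
  rw [map_sub, PowerSeries.coeff_mul_X_pow', PowerSeries.coeff_mk, PowerSeries.coeff_one]
  by_cases h0 : n = 0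
  · subst h0
    simp [show ¬ a ≤ 0 by omega]
  · by_cases hle : a ≤ n
    · have hiff : a ∣ n ↔ a ∣ n - a := by
        constructor
        · exact fun h => Nat.dvd_sub h dvd_rfl
        · intro h
          have := Nat.dvd_add h (dvd_refl a)
          rwa [Nat.sub_add_cancel hle] at this
      simp only [PowerSeries.coeff_mk, if_pos hle, if_neg h0]
      by_cases hd : a ∣ n
      · rw [if_pos hd, if_pos (hiff.mp hd)]; ring
      · rw [if_neg hd, if_neg (fun hh => hd (hiff.mpr hh))]; ring
    · have hd : ¬ a ∣ n := fun h => hle (Nat.le_of_dvd (Nat.pos_of_ne_zero h0) h)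
      simp [hle, h0, hd]

end AuxLemmas

theorem stmt4 (d k : ℕ) (hd : 1 ≤ d) (hk : k ≤ d)
    (v : Fin k → Fin d → ℤ)
    (hv : LinearIndependent ℚ (fun i : Fin k => fun j : Fin d => (v i j : ℚ)))
    (φ : (Fin d → ℤ) →+ ℤ) (hφ : ∀ i, 0 < φ (v i)) :
    (∀ n : ℕ, {u : Fin d → ℤ | coneIntMem d k v u ∧ φ u = (n : ℤ)}.Finite) ∧
    ({u : Fin d → ℤ | parUpperMem d k v u}.Finite) ∧
    (PowerSeries.mk fun n : ℕ =>
        (({u : Fin d → ℤ | coneIntMem d k v u ∧ φ u = (n : ℤ)}.ncard : ℤ)))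
      * ∏ i : Fin k, (1 - (PowerSeries.X : PowerSeries ℤ) ^ (φ (v i)).toNat)
      = ∑ᶠ p ∈ {u : Fin d → ℤ | parUpperMem d k v u},
          (PowerSeries.X : PowerSeries ℤ) ^ (φ p).toNat := by
  classical
  have hP : {u : Fin d → ℤ | parUpperMem d k v u}.Finite := finite_par
  have hC : ∀ n : ℕ, {u : Fin d → ℤ | coneIntMem d k v u ∧ φ u = (n : ℤ)}.Finite :=
    finite_cone φ hφ
  refine ⟨hC, hP, ?_⟩
  rw [← Set.Finite.coe_toFinset hP, finsum_mem_coe_finset]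
  have haZ : ∀ i, (((φ (v i)).toNat : ℤ)) = φ (v i) := fun i => Int.toNat_of_nonneg (hφ i).le
  have main : (PowerSeries.mk fun n : ℕ =>
        (({u : Fin d → ℤ | coneIntMem d k v u ∧ φ u = (n : ℤ)}.ncard : ℤ)))
      = (∑ p ∈ hP.toFinset, (PowerSeries.X : PowerSeries ℤ) ^ (φ p).toNat)
        * ∏ i : Fin k,
            PowerSeries.mk (fun n => if (φ (v i)).toNat ∣ n then (1 : ℤ) else 0) := by
    ext n
    rw [PowerSeries.coeff_mk, Finset.sum_mul, map_sum]
    set A : (Fin d → ℤ) → Finset (Fin k →₀ ℕ) := fun p =>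
      if (φ p).toNat ≤ n then
        (Finset.finsuppAntidiag (Finset.univ : Finset (Fin k)) (n - (φ p).toNat)).filter
          (fun l => ∀ i, (φ (v i)).toNat ∣ l i)
      else ∅ with hA
    have hmemA : ∀ p (l : Fin k →₀ ℕ), l ∈ A p →
        (φ p).toNat ≤ n ∧ (∑ i, l i) = n - (φ p).toNat ∧ ∀ i, (φ (v i)).toNat ∣ l i := by
      intro p l hl
      simp only [hA] at hl
      split_ifs at hl with h
      · rw [Finset.mem_filter, Finset.mem_finsuppAntidiag] at hl
        exact ⟨h, hl.1.1, hl.2⟩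
      · simp at hl
    have hterm : ∀ p ∈ hP.toFinset,
        (PowerSeries.coeff n) ((PowerSeries.X : PowerSeries ℤ) ^ (φ p).toNat
          * ∏ i : Fin k,
              PowerSeries.mk (fun n => if (φ (v i)).toNat ∣ n then (1 : ℤ) else 0))
        = ((A p).card : ℤ) := by
      intro p _
      rw [PowerSeries.coeff_X_pow_mul']
      simp only [hA]
      split_ifs with h
      · rw [PowerSeries.coeff_prod]
        have hl : ∀ l ∈ Finset.finsuppAntidiag (Finset.univ : Finset (Fin k))
              (n - (φ p).toNat),
            (∏ i : Fin k, (PowerSeries.coeff (l i))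
                (PowerSeries.mk (fun n => if (φ (v i)).toNat ∣ n then (1 : ℤ) else 0)))
            = if (∀ i, (φ (v i)).toNat ∣ l i) then (1 : ℤ) else 0 := by
          intro l _
          simp only [PowerSeries.coeff_mk]
          rw [Finset.prod_boole]
          simp
        rw [Finset.sum_congr rfl hl, Finset.sum_boole]
      · simp
    rw [Finset.sum_congr rfl hterm, ← Nat.cast_sum, ← Finset.card_sigma,
        Set.ncard_eq_toFinset_card _ (hC n)]
    congr 1
    refine (Finset.card_bij
      (fun x _ => fun j => x.1 j + ∑ i, ((x.2 i / (φ (v i)).toNat : ℕ) : ℤ) * v i j)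
      ?_ ?_ ?_).symm
    -- maps into the cone set
    · rintro ⟨p, l⟩ hx
      rw [Finset.mem_sigma] at hx
      obtain ⟨hpP, hlA⟩ := hx
      obtain ⟨hlen, hlsum, hldvd⟩ := hmemA p l hlA
      obtain ⟨mu, hmu, hrep⟩ := hP.mem_toFinset.mp hpP
      have hli : ∀ i, (l i / (φ (v i)).toNat : ℕ) * (φ (v i)).toNat = l i :=
        fun i => Nat.div_mul_cancel (hldvd i)
      rw [Set.Finite.mem_toFinset]
      constructor
      · refine ⟨fun i => mu i + ((l i / (φ (v i)).toNat : ℕ) : ℚ),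
          fun i => add_pos_of_pos_of_nonneg (hmu i).1 (by positivity), fun j => ?_⟩
        have hgen : ∀ c : Fin k → ℕ, ((p j + ∑ i, (c i : ℤ) * v i j : ℤ) : ℚ)
            = ∑ i, (mu i + (c i : ℚ)) * (v i j : ℚ) := by
          intro c
          have hrepj : ((p j : ℤ) : ℚ) = ∑ i, mu i * (v i j : ℚ) := hrep j
          push_cast
          rw [hrepj, ← Finset.sum_add_distrib]
          exact Finset.sum_congr rfl fun i _ => by ring
        exact hgen fun i => l i / (φ (v i)).toNat
      · have h1 := phi_shift (v := v) φ p (fun i => l i / (φ (v i)).toNat)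
        rw [h1]
        have h2 : ∑ i, ((l i / (φ (v i)).toNat : ℕ) : ℤ) * φ (v i)
            = ((∑ i, l i : ℕ) : ℤ) := by
          push_cast
          refine Finset.sum_congr rfl fun i _ => ?_
          have h3 : ((l i / (φ (v i)).toNat : ℕ) : ℤ) * (((φ (v i)).toNat : ℕ) : ℤ)
              = (l i : ℤ) := by exact_mod_cast congrArg (Nat.cast : ℕ → ℤ) (hli i)
          rw [haZ i] at h3
          exact h3
        rw [h2, hlsum]
        have hpn : 0 ≤ φ p := phi_nonneg φ hφ ⟨mu, hmu, hrep⟩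
        omega
    -- injective
    · rintro ⟨p, l⟩ hx ⟨p', l'⟩ hx' heq
      rw [Finset.mem_sigma] at hx hx'
      obtain ⟨mu, hmu, hrep⟩ := hP.mem_toFinset.mp hx.1
      obtain ⟨mu', hmu', hrep'⟩ := hP.mem_toFinset.mp hx'.1
      obtain ⟨-, -, hldvd⟩ := hmemA p l hx.2
      obtain ⟨-, -, hldvd'⟩ := hmemA p' l' hx'.2
      have heqj : ∀ j, p j + ∑ i, ((l i / (φ (v i)).toNat : ℕ) : ℤ) * v i j
          = p' j + ∑ i, ((l' i / (φ (v i)).toNat : ℕ) : ℤ) * v i j :=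
        fun j => congrFun heq j
      have hcoeff : (fun i => mu i + ((l i / (φ (v i)).toNat : ℕ) : ℚ))
          = fun i => mu' i + ((l' i / (φ (v i)).toNat : ℕ) : ℚ) := by
        apply coeffs_unique hv
        intro j
        have hrepj : ((p j : ℤ) : ℚ) = ∑ i, mu i * (v i j : ℚ) := hrep j
        have hrepj' : ((p' j : ℤ) : ℚ) = ∑ i, mu' i * (v i j : ℚ) := hrep' j
        simp_rw [add_mul]
        rw [Finset.sum_add_distrib, Finset.sum_add_distrib, ← hrepj, ← hrepj']
        have hq := heqj j
        have hgen : ∀ c c' : Fin k → ℕ,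
            (p j + ∑ i, (c i : ℤ) * v i j = p' j + ∑ i, (c' i : ℤ) * v i j) →
            ((p j : ℤ) : ℚ) + ∑ i, ((c i : ℕ) : ℚ) * (v i j : ℚ)
              = ((p' j : ℤ) : ℚ) + ∑ i, ((c' i : ℕ) : ℚ) * (v i j : ℚ) := by
          intro c c' hcc
          exact_mod_cast hcc
        exact hgen _ _ hq
      have hmm : ∀ i, (l i / (φ (v i)).toNat : ℕ) = (l' i / (φ (v i)).toNat : ℕ) ∧
          mu i = mu' i := by
        intro i
        have := congrFun hcoeff i
        exact frac_unique (hmu i).1 (hmu i).2 (hmu' i).1 (hmu' i).2 this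
      have hleq : l = l' := by
        apply Finsupp.ext
        intro i
        rw [← Nat.div_mul_cancel (hldvd i), ← Nat.div_mul_cancel (hldvd' i), (hmm i).1]
      have hpeq : p = p' := by
        funext j
        have h4 := heqj j
        have h5 : ∑ i, ((l i / (φ (v i)).toNat : ℕ) : ℤ) * v i j
            = ∑ i, ((l' i / (φ (v i)).toNat : ℕ) : ℤ) * v i j :=
          Finset.sum_congr rfl fun i _ => by rw [(hmm i).1]
        omega
      subst hpeq
      subst hleq
      rfl
    -- surjective
    · intro u hu
      rw [Set.Finite.mem_toFinset] at hu
      obtain ⟨⟨lam, hlam, hrep⟩, hφu⟩ := hu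
      choose m hm1 hm2 using fun i => exists_nat_frac (hlam i)
      set p : Fin d → ℤ := fun j => u j - ∑ i, (m i : ℤ) * v i j with hpdef
      have hupj : ∀ j, u j = p j + ∑ i, (m i : ℤ) * v i j := fun j => by
        simp only [hpdef]; ring
      have hpar : parUpperMem d k v p := by
        refine ⟨fun i => lam i - (m i : ℚ), fun i => ⟨hm1 i, hm2 i⟩, fun j => ?_⟩
        simp only [hpdef]
        push_cast
        rw [hrep j, ← Finset.sum_sub_distrib]
        exact Finset.sum_congr rfl fun i _ => by ring
      have hpP : p ∈ hP.toFinset := hP.mem_toFinset.mpr hpar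
      have hpnn : 0 ≤ φ p := phi_nonneg φ hφ hpar
      have hφu' : φ u = φ p + ∑ i, (m i : ℤ) * φ (v i) := by
        have := phi_shift (v := v) φ p m
        rw [show u = (fun j => p j + ∑ i, (m i : ℤ) * v i j) from funext hupj]
        exact this
      have hsum2 : ((∑ i, m i * (φ (v i)).toNat : ℕ) : ℤ) = ∑ i, (m i : ℤ) * φ (v i) := by
        push_cast
        exact Finset.sum_congr rfl fun i _ => by rw [haZ i]
      have hS : φ p + ((∑ i, m i * (φ (v i)).toNat : ℕ) : ℤ) = (n : ℤ) := by
        rw [hsum2, ← hφu', hφu]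
      have hle : (φ p).toNat ≤ n := by omega
      set l : Fin k →₀ ℕ :=
        Finsupp.equivFunOnFinite.symm (fun i => m i * (φ (v i)).toNat) with hldef
      have hlapp : ∀ i, l i = m i * (φ (v i)).toNat := fun i => by
        simp [hldef]
      refine ⟨⟨p, l⟩, ?_, ?_⟩
      · rw [Finset.mem_sigma]
        refine ⟨hpP, ?_⟩
        simp only [hA]
        rw [if_pos hle, Finset.mem_filter, Finset.mem_finsuppAntidiag]
        refine ⟨⟨?_, Finset.subset_univ _⟩, fun i => ?_⟩
        · have h6 : ∑ i, l i = ∑ i, m i * (φ (v i)).toNat :=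
            Finset.sum_congr rfl fun i _ => hlapp i
          rw [h6]
          omega
        · rw [hlapp i]
          exact dvd_mul_left _ _
      · funext j
        have h7 : ∑ i, ((l i / (φ (v i)).toNat : ℕ) : ℤ) * v i j
            = ∑ i, (m i : ℤ) * v i j := by
          refine Finset.sum_congr rfl fun i _ => ?_
          have hpos : 0 < (φ (v i)).toNat := by have := hφ i; omega
          have h8 : l i / (φ (v i)).toNat = m i := by
            rw [hlapp i]
            exact Nat.mul_div_cancel _ hpos
          rw [h8]
        dsimp only
        rw [h7, hupj j]
  rw [main, mul_assoc, ← Finset.prod_mul_distrib]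
  have hone : ∀ i ∈ (Finset.univ : Finset (Fin k)),
      (PowerSeries.mk (fun n => if (φ (v i)).toNat ∣ n then (1 : ℤ) else 0))
        * (1 - (PowerSeries.X : PowerSeries ℤ) ^ (φ (v i)).toNat) = 1 :=
    fun i _ => geomAux _ (by have := hφ i; omega)
  rw [Finset.prod_congr rfl hone, Finset.prod_const_one, mul_one]
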